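/- Let A be the adjacency matrix of a DSRG with parameters (n,k,t,λ,μ) respecting a homogeneous partition π with a cells of size b (ab = n). Suppose the π-join M₁(A) (the (a+1)×(a+1) block-circulant matrix with first block-row (A, U₁, U₂, …, U_a)) is the adjacency matrix of a DSRG with parameters (ñ,k̃,t̃,λ̃,μ̃). Then ñ = (a+1)n, k̃ = n+k, t̃ = b+t, λ̃ = b+λ, and μ̃ = b+μ. -/
import Mathlib


open Matrix

/-- The all-ones matrix. -/
def onesMat (n : ℕ) : Matrix (Fin n) (Fin n) ℝ := Matrix.of fun _ _ => 1

/-- The all-ones matrix indexed by blocks. -/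
def Jbig (N n : ℕ) : Matrix (Fin N × Fin n) (Fin N × Fin n) ℝ := Matrix.of fun _ _ => 1

/-- `Ublk a b i`: columns in the `i`-th cell are all-ones, other entries zero. -/
def Ublk (a b : ℕ) (i : ℕ) : Matrix (Fin (a * b)) (Fin (a * b)) ℝ :=
  Matrix.of fun _ c => if (c : ℕ) / b = i then 1 else 0

/-- The π-join of `A` in power `j`: the block-circulant matrix of block order
`j*a+1` whose first block-row is `(A, U₁,…,U₁, U₂,…,U₂, …, U_a,…,U_a)`,
each `Uᵢ` repeated `j` times. -/
def Mjoin (a b j : ℕ) (A : Matrix (Fin (a * b)) (Fin (a * b)) ℝ) :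
    Matrix (Fin (j * a + 1) × Fin (a * b)) (Fin (j * a + 1) × Fin (a * b)) ℝ :=
  fun p q =>
    if q.1 - p.1 = 0 then A p.2 q.2
    else Ublk a b ((((q.1 - p.1 : Fin (j * a + 1)) : ℕ) - 1) / j) p.2 q.2


open Matrix

section Aux

lemma mj00 (a b : ℕ) (A : Matrix (Fin (a*b)) (Fin (a*b)) ℝ) (x y : Fin (a*b)) :
    Mjoin a b 1 A (0, x) (0, y) = A x y := by
  simp [Mjoin]

lemma mj0s (a b : ℕ) (A : Matrix (Fin (a*b)) (Fin (a*b)) ℝ) (x y : Fin (a*b))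
    (i : Fin (1*a)) :
    Mjoin a b 1 A (0, x) (i.succ, y) = if (y:ℕ)/b = (i:ℕ) then 1 else 0 := by
  show (if (i.succ - 0 : Fin (1*a+1)) = 0 then _ else Ublk a b _ x y) = _
  rw [sub_zero, if_neg (Fin.succ_ne_zero i)]
  simp [Ublk, Fin.val_succ]

lemma mjs0 (a b : ℕ) (A : Matrix (Fin (a*b)) (Fin (a*b)) ℝ) (x y : Fin (a*b))
    (i : Fin (1*a)) :
    Mjoin a b 1 A (i.succ, y) (0, x) = if (x:ℕ)/b = a - (i:ℕ) - 1 then 1 else 0 := by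
  have hi : (i:ℕ) < 1*a := i.isLt
  have hne : ((0 : Fin (1*a+1)) - i.succ) ≠ 0 := by
    intro h
    rw [sub_eq_zero] at h
    exact Fin.succ_ne_zero i h.symm
  have hval : (((0 : Fin (1*a+1)) - i.succ : Fin (1*a+1)) : ℕ) = a - (i:ℕ) := by
    rw [Fin.sub_def]
    simp only [Fin.val_zero, Fin.val_succ, Nat.zero_add]
    rw [Nat.mod_eq_of_lt (by omega)]
    omega
  show (if ((0:Fin (1*a+1)) - i.succ : Fin (1*a+1)) = 0 then _ else Ublk a b _ y x) = _
  rw [if_neg hne]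
  simp only [Ublk, Matrix.of_apply, hval, Nat.div_one]

lemma cellsum (a b : ℕ) (hb : 0 < b) (i : ℕ) (hi : i < a) :
    (∑ y : Fin (a*b), (if (y:ℕ)/b = i then (1:ℝ) else 0)) = b := by
  rw [Fin.sum_univ_eq_sum_range (fun y => if y / b = i then (1:ℝ) else 0) (a*b)]
  rw [Finset.sum_boole]
  have hfil : (Finset.range (a*b)).filter (fun y => y / b = i)
      = Finset.Ico (i*b) (i*b+b) := by
    ext y
    simp only [Finset.mem_filter, Finset.mem_range, Finset.mem_Ico]
    constructor
    · rintro ⟨hy, hdiv⟩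
      subst hdiv
      exact ⟨Nat.div_mul_le_self y b, Nat.lt_div_mul_add hb⟩
    · rintro ⟨h1, h2⟩
      have h3 : i * b + b ≤ a * b := by
        have := Nat.mul_le_mul_right b (show i + 1 ≤ a from hi)
        calc i * b + b = (i+1) * b := by ring
        _ ≤ a * b := this
      refine ⟨lt_of_lt_of_le h2 h3, ?_⟩
      have hq := Nat.div_mul_le_self y b
      have hq2 := Nat.lt_div_mul_add (a := y) hb
      -- y/b = i : use antisymmetry via le
      have hle : y / b ≤ i := by
        by_contra hc
        push_neg at hc
        have : (i+1) * b ≤ (y/b) * b := Nat.mul_le_mul_right b hc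
        have : i * b + b ≤ y / b * b := by calc i*b + b = (i+1)*b := by ring
                                               _ ≤ y/b*b := this
        omega
      have hge : i ≤ y / b := by
        by_contra hc
        push_neg at hc
        have : (y/b+1) * b ≤ i * b := Nat.mul_le_mul_right b hc
        have : y/b * b + b ≤ i * b := by calc y/b*b + b = (y/b+1)*b := by ring
                                              _ ≤ i*b := this
        omega
      omega
  rw [hfil, Nat.card_Ico]
  push_cast
  congr 1
  omega

lemma onehit (a b : ℕ) (ha : 0 < a) (hb : 0 < b) (x : Fin (a*b)) (c : ℝ) :
    (∑ i : Fin (1*a), (if (x:ℕ)/b = a - (i:ℕ) - 1 then c else 0)) = c := by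
  have hx : (x:ℕ)/b < a :=
    Nat.div_lt_of_lt_mul (lt_of_lt_of_eq x.isLt (Nat.mul_comm a b))
  generalize (x:ℕ)/b = q at hx ⊢
  set i₀ : Fin (1*a) := ⟨a - 1 - q, by omega⟩ with hi₀
  have hv : (i₀ : ℕ) = a - 1 - q := rfl
  have hcong : ∀ i : Fin (1*a),
      (if q = a - (i:ℕ) - 1 then c else 0) = (if i = i₀ then c else 0) := by
    intro i
    have hi : (i:ℕ) < 1*a := i.isLt
    by_cases h : q = a - (i:ℕ) - 1
    · rw [if_pos h, if_pos (Fin.ext (by rw [hv]; omega))]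
    · refine (if_neg h).trans (if_neg fun hh => h ?_).symm
      have hvv : (i:ℕ) = (i₀:ℕ) := congrArg Fin.val hh
      rw [hv] at hvv
      omega
  rw [Finset.sum_congr rfl (fun i _ => hcong i)]
  simp

lemma rowsumM (a b : ℕ) (hb : 0 < b) (k : ℕ)
    (A : Matrix (Fin (a*b)) (Fin (a*b)) ℝ)
    (hrow : ∀ x : Fin (a*b), (∑ y, A x y) = (k:ℝ)) (x : Fin (a*b)) :
    (Mjoin a b 1 A * Jbig (1*a+1) (a*b)) ((0 : Fin (1*a+1)), x) ((0 : Fin (1*a+1)), x)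
      = (k : ℝ) + (a*b : ℕ) := by
  rw [Matrix.mul_apply]
  simp only [Jbig, Matrix.of_apply, mul_one]
  rw [Fintype.sum_prod_type, Fin.sum_univ_succ]
  have h0 : (∑ y, Mjoin a b 1 A (0, x) ((0 : Fin (1*a+1)), y)) = (k:ℝ) := by
    rw [← hrow x]
    exact Finset.sum_congr rfl fun y _ => mj00 a b A x y
  rw [h0]
  have h1 : ∀ i : Fin (1*a), (∑ y, Mjoin a b 1 A (0, x) (i.succ, y)) = (b:ℝ) := by
    intro i
    have hi : (i:ℕ) < a := by have := i.isLt; omega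
    rw [Finset.sum_congr rfl fun y _ => mj0s a b A x y i]
    exact cellsum a b hb (i:ℕ) hi
  rw [Finset.sum_congr rfl fun i _ => h1 i, Finset.sum_const, Finset.card_univ,
    Fintype.card_fin]
  push_cast
  ring

lemma m2entry (a b : ℕ) (ha : 0 < a) (hb : 0 < b)
    (A : Matrix (Fin (a*b)) (Fin (a*b)) ℝ) (x₁ x₂ : Fin (a*b)) :
    (Mjoin a b 1 A * Mjoin a b 1 A) ((0 : Fin (1*a+1)), x₁) ((0 : Fin (1*a+1)), x₂)
      = (A * A) x₁ x₂ + (b : ℝ) := by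
  rw [Matrix.mul_apply, Fintype.sum_prod_type, Fin.sum_univ_succ]
  have h0 : (∑ y, Mjoin a b 1 A (0, x₁) ((0 : Fin (1*a+1)), y)
      * Mjoin a b 1 A (0, y) (0, x₂)) = (A*A) x₁ x₂ := by
    rw [Matrix.mul_apply]
    exact Finset.sum_congr rfl fun y _ => by rw [mj00, mj00]
  rw [h0]
  have h1 : ∀ i : Fin (1*a),
      (∑ y, Mjoin a b 1 A (0, x₁) (i.succ, y) * Mjoin a b 1 A (i.succ, y) (0, x₂))
      = if (x₂:ℕ)/b = a - (i:ℕ) - 1 then (b:ℝ) else 0 := by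
    intro i
    have hi : (i:ℕ) < a := by have := i.isLt; omega
    simp_rw [mj0s a b A x₁ _ i, mjs0 a b A x₂ _ i]
    by_cases h : (x₂:ℕ)/b = a - (i:ℕ) - 1
    · simp_rw [if_pos h, mul_one]
      exact cellsum a b hb (i:ℕ) hi
    · simp_rw [if_neg h, mul_zero, Finset.sum_const_zero]
  rw [Finset.sum_congr rfl fun i _ => h1 i, onehit a b ha hb x₂ (b:ℝ)]

end Aux

/-- If the π-join `M₁(A)` of a DSRG is a DSRG with parameters `(ñ,k̃,t̃,λ̃,μ̃)`,
then `ñ = (a+1)n`, `k̃ = n+k`, `t̃ = b+t`, `λ̃ = b+λ`, `μ̃ = b+μ`. -/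
theorem pijoin_parameters (a b k t l m : ℕ) (ha : 0 < a) (hb : 0 < b)
    (A : Matrix (Fin (a * b)) (Fin (a * b)) ℝ)
    (h01 : ∀ i j, A i j = 0 ∨ A i j = 1)
    (hdiag : ∀ i, A i i = 0)
    (hAJ : A * onesMat (a * b) = (k : ℝ) • onesMat (a * b))
    (hJA : onesMat (a * b) * A = (k : ℝ) • onesMat (a * b))
    (hA2 : A * A = (t : ℝ) • (1 : Matrix (Fin (a * b)) (Fin (a * b)) ℝ) + (l : ℝ) • A
            + (m : ℝ) • (onesMat (a * b) - 1 - A))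
    (hlt : l < t) (htk : t < k) (hm0 : 0 < m) (hmt : m ≤ t)
    (ntil ktil ttil ltil mtil : ℕ)
    (hcard : ntil = Fintype.card (Fin (1 * a + 1) × Fin (a * b)))
    (hMJ : Mjoin a b 1 A * Jbig (1 * a + 1) (a * b)
            = (ktil : ℝ) • Jbig (1 * a + 1) (a * b))
    (hJM : Jbig (1 * a + 1) (a * b) * Mjoin a b 1 A
            = (ktil : ℝ) • Jbig (1 * a + 1) (a * b))
    (hM2 : Mjoin a b 1 A * Mjoin a b 1 A
            = (ttil : ℝ) • (1 : Matrix (Fin (1 * a + 1) × Fin (a * b))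
                (Fin (1 * a + 1) × Fin (a * b)) ℝ)
              + (ltil : ℝ) • Mjoin a b 1 A
              + (mtil : ℝ) • (Jbig (1 * a + 1) (a * b) - 1 - Mjoin a b 1 A))
    (hlttil : ltil < ttil) (htktil : ttil < ktil) (hm0til : 0 < mtil) (hmttil : mtil ≤ ttil) :
    ntil = (a + 1) * (a * b) ∧ ktil = a * b + k ∧ ttil = b + t ∧
      ltil = b + l ∧ mtil = b + m := by
  have hab : 0 < a * b := Nat.mul_pos ha hb
  set x₀ : Fin (a*b) := ⟨0, hab⟩ with hx₀
  -- row sums of A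
  have hrow : ∀ x : Fin (a*b), (∑ y, A x y) = (k:ℝ) := by
    intro x
    have e := congrFun (congrFun hAJ x) x
    simpa [onesMat, Matrix.mul_apply, Matrix.smul_apply] using e
  -- entrywise version of hA2
  have keyA : ∀ x₁ x₂ : Fin (a*b), (A*A) x₁ x₂
      = (t:ℝ) * (if x₁ = x₂ then 1 else 0) + (l:ℝ) * A x₁ x₂
        + (m:ℝ) * (1 - (if x₁ = x₂ then 1 else 0) - A x₁ x₂) := by
    intro x₁ x₂
    have e := congrFun (congrFun hA2 x₁) x₂
    simpa [onesMat, Matrix.one_apply, Matrix.smul_apply, Matrix.sub_apply,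
      Matrix.add_apply] using e
  -- entrywise version of hM2 at block-(0,0) positions
  have key : ∀ x₁ x₂ : Fin (a*b), (A*A) x₁ x₂ + (b:ℝ)
      = (ttil:ℝ) * (if x₁ = x₂ then 1 else 0) + (ltil:ℝ) * A x₁ x₂
        + (mtil:ℝ) * (1 - (if x₁ = x₂ then 1 else 0) - A x₁ x₂) := by
    intro x₁ x₂
    have e := congrFun (congrFun hM2 ((0 : Fin (1*a+1)), x₁)) ((0 : Fin (1*a+1)), x₂)
    rw [m2entry a b ha hb A x₁ x₂] at e
    have h1 : (1 : Matrix (Fin (1 * a + 1) × Fin (a * b))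
        (Fin (1 * a + 1) × Fin (a * b)) ℝ) ((0 : Fin (1*a+1)), x₁) ((0 : Fin (1*a+1)), x₂)
        = (if x₁ = x₂ then (1:ℝ) else 0) := by
      rw [Matrix.one_apply]
      by_cases h : x₁ = x₂
      · rw [if_pos h, if_pos (by rw [h])]
      · rw [if_neg h, if_neg (fun hh => h (congrArg Prod.snd hh))]
    simpa [Jbig, Matrix.smul_apply, Matrix.sub_apply, Matrix.add_apply, h1,
      mj00 a b A x₁ x₂] using e
  -- ñ
  have hn : ntil = (a + 1) * (a * b) := by
    rw [hcard, Fintype.card_prod, Fintype.card_fin, Fintype.card_fin, Nat.one_mul]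
  -- k̃
  have hkt : ktil = a * b + k := by
    have e := congrFun (congrFun hMJ ((0 : Fin (1*a+1)), x₀)) ((0 : Fin (1*a+1)), x₀)
    rw [rowsumM a b hb k A hrow x₀] at e
    have e2 : (k:ℝ) + (a*b : ℕ) = (ktil : ℝ) := by
      simpa [Jbig, Matrix.smul_apply] using e
    have : (k + a*b : ℕ) = ktil := by exact_mod_cast e2
    omega
  -- t̃
  have htt : ttil = b + t := by
    have e := key x₀ x₀
    rw [keyA x₀ x₀] at e
    rw [if_pos rfl, hdiag x₀] at e
    have e2 : (t:ℝ) + b = ttil := by linarith [e]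
    have : (t + b : ℕ) = ttil := by exact_mod_cast e2
    omega
  -- existence of a 1-entry
  have hk2 : 2 ≤ k := by omega
  obtain ⟨y₁, hy₁⟩ : ∃ y, A x₀ y = 1 := by
    by_contra hno
    push_neg at hno
    have hz : ∀ y, A x₀ y = 0 := fun y => (h01 x₀ y).resolve_right (hno y)
    have := hrow x₀
    rw [Finset.sum_congr rfl (fun y _ => hz y)] at this
    simp at this
    have : k = 0 := by exact_mod_cast this.symm
    omega
  -- λ̃
  have hlt2 : ltil = b + l := by
    have hne : x₀ ≠ y₁ := by
      intro h
      rw [← h, hdiag x₀] at hy₁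
      norm_num at hy₁
    have e := key x₀ y₁
    rw [keyA x₀ y₁, if_neg hne, hy₁] at e
    have e2 : (l:ℝ) + b = ltil := by linarith [e]
    have : (l + b : ℕ) = ltil := by exact_mod_cast e2
    omega
  -- existence of an off-diagonal 0-entry
  obtain ⟨u, v, huv, hA0⟩ : ∃ u v : Fin (a*b), u ≠ v ∧ A u v = 0 := by
    by_contra hno
    push_neg at hno
    have hall : ∀ u v : Fin (a*b), u ≠ v → A u v = 1 :=
      fun u v h => (h01 u v).resolve_left (hno u v h)
    have heq : (∑ y, A x₀ y) = ∑ y, A x₀ y * A y x₀ := by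
      refine Finset.sum_congr rfl fun y _ => ?_
      by_cases hy : y = x₀
      · rw [hy, hdiag x₀]; ring
      · rw [hall x₀ y (fun h => hy h.symm), hall y x₀ hy]; ring
    have hAA : (∑ y, A x₀ y * A y x₀) = (A*A) x₀ x₀ := (Matrix.mul_apply).symm
    have : (k:ℝ) = (t:ℝ) := by
      rw [← hrow x₀, heq, hAA, keyA x₀ x₀, if_pos rfl, hdiag x₀]
      ring
    have : k = t := by exact_mod_cast this
    omega
  -- μ̃
  have hmt2 : mtil = b + m := by
    have e := key u v
    rw [keyA u v, if_neg huv, hA0] at e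
    have e2 : (m:ℝ) + b = mtil := by linarith [e]
    have : (m + b : ℕ) = mtil := by exact_mod_cast e2
    omega
  exact ⟨hn, hkt, htt, hlt2, hmt2⟩
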